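/- arXiv:2310.01165 — 2 statements merged into one kernel-verified Lean document; each statement's English description precedes it below -/
import Mathlib

section
/- (Null-forgetting constraint, sufficiency) With exact quadratic losses E_o(θ) = ½(θ−θ_o)ᵀ H_o(θ−θ_o), H_o PSD, and updates Δ_t = θ_t − θ_{t−1}: if for every t ∈ [2,T] we have Δ_tᵀ(∑_{o<t} H_o)Δ_t = 0, then E_o(θ_T) = 0 for every o < T. -/
open Matrix

theorem null_forgetting_constraint_sufficiency {n : ℕ} (T : ℕ)
    (θ : ℕ → Fin n → ℝ) (H : ℕ → Matrix (Fin n) (Fin n) ℝ)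
    (hH : ∀ o, (H o).PosSemidef)
    (hconstraint : ∀ t, 2 ≤ t → t ≤ T →
      (θ t - θ (t - 1)) ⬝ᵥ
        (∑ o ∈ Finset.Ico 1 t, H o).mulVec (θ t - θ (t - 1)) = 0) :
    ∀ o, 1 ≤ o → o < T →
      (1 / 2 : ℝ) * ((θ T - θ o) ⬝ᵥ (H o).mulVec (θ T - θ o)) = 0 := by
  -- each update is killed by each earlier Hessian
  have key : ∀ t, 2 ≤ t → t ≤ T → ∀ o, 1 ≤ o → o < t →
      (H o).mulVec (θ t - θ (t - 1)) = 0 := by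
    intro t ht2 htT o ho1 hot
    set x := θ t - θ (t - 1)
    have hsum := hconstraint t ht2 htT
    have hterm : ∀ o ∈ Finset.Ico 1 t, x ⬝ᵥ (H o).mulVec x = 0 := by
      apply (Finset.sum_eq_zero_iff_of_nonneg (fun o _ => (hH o).dotProduct_mulVec_nonneg x)).mp
      rw [← hsum]
      have hlin : (∑ o ∈ Finset.Ico 1 t, H o) *ᵥ x = ∑ o ∈ Finset.Ico 1 t, (H o) *ᵥ x :=
        map_sum (Matrix.mulVec.addMonoidHomLeft x) _ _
      rw [hlin]
      simp only [dotProduct, Finset.sum_apply, Finset.mul_sum, Pi.star_apply, star_trivial]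
      rw [Finset.sum_comm]
    have h0 : x ⬝ᵥ (H o) *ᵥ x = 0 := hterm o (Finset.mem_Ico.mpr ⟨ho1, hot⟩)
    have := ((hH o).dotProduct_mulVec_zero_iff x).mp (by simpa using h0)
    simpa using this
  intro o ho1 hoT
  -- show (H o).mulVec (θ t - θ o) = 0 for all o ≤ t ≤ T by induction
  have main : ∀ t, o ≤ t → t ≤ T → (H o).mulVec (θ t - θ o) = 0 := by
    intro t
    induction t with
    | zero => intro h1 _; omega
    | succ s ih =>
      intro hos hsT
      rcases Nat.lt_or_ge o (s + 1) with h | h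
      · have hos' : o ≤ s := Nat.lt_succ_iff.mp h
        have h1 : (H o).mulVec (θ s - θ o) = 0 := ih hos' (le_trans (Nat.le_succ s) hsT)
        have h2 : (H o).mulVec (θ (s + 1) - θ s) = 0 := by
          have := key (s + 1) (by omega) hsT o ho1 (by omega)
          simpa using this
        have : θ (s + 1) - θ o = (θ (s + 1) - θ s) + (θ s - θ o) := by ring
        rw [this, Matrix.mulVec_add, h1, h2, add_zero]
      · have : o = s + 1 := le_antisymm hos h
        subst this
        simp
  have := main T (le_of_lt hoT) le_rfl
  rw [this]
  simp
end

section
/- (Null forgetting theorem, quadratic version) With exact quadratic losses and average forgetting E(t) = (1/t)∑_{o=1}^{t} E_o(θ_t), if E(1) = ⋯ = E(t−1) = 0 then E(t) = (1/(2t)) Δ_tᵀ(∑_{o<t} H_o)Δ_t. -/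
open Matrix

theorem null_forgetting_quadratic {n : ℕ} (t : ℕ) (ht : 1 ≤ t)
    (θ : ℕ → Fin n → ℝ) (H : ℕ → Matrix (Fin n) (Fin n) ℝ)
    (hH : ∀ o, (H o).PosSemidef)
    (E : ℕ → (Fin n → ℝ) → ℝ)
    (hE : ∀ o ψ, E o ψ = (1 / 2 : ℝ) * ((ψ - θ o) ⬝ᵥ (H o).mulVec (ψ - θ o)))
    (hprev : ∀ k, 1 ≤ k → k < t →
      (1 / (k : ℝ)) * ∑ o ∈ Finset.Icc 1 k, E o (θ k) = 0) :
    (1 / (t : ℝ)) * ∑ o ∈ Finset.Icc 1 t, E o (θ t) =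
      (1 / (2 * (t : ℝ))) * ((θ t - θ (t - 1)) ⬝ᵥ
        (∑ o ∈ Finset.Ico 1 t, H o).mulVec (θ t - θ (t - 1))) := by
  rcases eq_or_lt_of_le ht with h1 | h2
  · subst h1
    simp [hE]
  · set s := t - 1 with hs
    have hst : t = s + 1 := (Nat.succ_pred_eq_of_pos (by omega)).symm
    have hs1 : 1 ≤ s := by omega
    have hsum0 : ∑ o ∈ Finset.Icc 1 s, E o (θ s) = 0 := by
      have h := hprev s hs1 (by omega)
      have hspos : (0:ℝ) < s := by exact_mod_cast hs1
      have : (1 / (s:ℝ)) ≠ 0 := by positivity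
      exact (mul_eq_zero.mp h).resolve_left this
    have hnonneg : ∀ o ∈ Finset.Icc 1 s, 0 ≤ E o (θ s) := by
      intro o _
      rw [hE]
      have := (hH o).dotProduct_mulVec_nonneg (θ s - θ o)
      simp only [star_trivial] at this
      positivity
    have hzero := (Finset.sum_eq_zero_iff_of_nonneg hnonneg).mp hsum0
    have hker : ∀ o ∈ Finset.Icc 1 s, (H o) *ᵥ (θ s - θ o) = 0 := by
      intro o ho
      have h0 := hzero o ho
      rw [hE] at h0
      have h1 : (θ s - θ o) ⬝ᵥ (H o) *ᵥ (θ s - θ o) = 0 := by linarith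
      exact ((hH o).dotProduct_mulVec_zero_iff (θ s - θ o)).mp (by simpa using h1)
    have hterm : ∀ o ∈ Finset.Icc 1 s, E o (θ t) =
        (1/2 : ℝ) * ((θ t - θ s) ⬝ᵥ (H o) *ᵥ (θ t - θ s)) := by
      intro o ho
      rw [hE]
      congr 1
      have hT : (H o)ᵀ = H o := by
        have h := (hH o).1
        rwa [Matrix.IsHermitian, conjTranspose_eq_transpose_of_trivial] at h
      have hsym : ∀ x y : Fin n → ℝ, x ⬝ᵥ (H o) *ᵥ y = y ⬝ᵥ (H o) *ᵥ x := by
        intro x y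
        rw [dotProduct_mulVec]
        nth_rewrite 1 [← hT]
        rw [vecMul_transpose, dotProduct_comm]
      have hdecomp : θ t - θ o = (θ t - θ s) + (θ s - θ o) := by abel
      have hk := hker o ho
      rw [hdecomp, add_dotProduct, mulVec_add, hk]
      simp only [add_zero, dotProduct_add]
      rw [hsym (θ s - θ o) (θ t - θ s), hk]
      simp
    have htt : E t (θ t) = 0 := by simp [hE]
    have hsplit : Finset.Icc 1 t = insert t (Finset.Icc 1 s) := by
      rw [hst, Finset.insert_Icc_right_eq_Icc_add_one (by omega)]
    have hsum : ∑ o ∈ Finset.Icc 1 t, E o (θ t)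
        = ∑ o ∈ Finset.Icc 1 s, ((1/2 : ℝ) * ((θ t - θ s) ⬝ᵥ (H o) *ᵥ (θ t - θ s))) := by
      rw [hsplit, Finset.sum_insert (by simp; omega), htt, zero_add]
      exact Finset.sum_congr rfl hterm
    have hIco : Finset.Ico 1 t = Finset.Icc 1 s := by
      rw [hst, Finset.Ico_add_one_right_eq_Icc]
    rw [hsum, hIco, ← Finset.mul_sum]
    have hmv : (θ t - θ s) ⬝ᵥ (∑ o ∈ Finset.Icc 1 s, H o) *ᵥ (θ t - θ s) =
        ∑ o ∈ Finset.Icc 1 s, (θ t - θ s) ⬝ᵥ (H o) *ᵥ (θ t - θ s) := by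
      classical
      induction (Finset.Icc 1 s) using Finset.induction with
      | empty => simp
      | insert _ _ h ih =>
        rw [Finset.sum_insert h, Finset.sum_insert h, Matrix.add_mulVec, dotProduct_add, ih]
    rw [hmv]
    ring
end
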